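/- Let β ∈ (0,1). Let Q be an ℕ-valued random variable with P(Q = k) = p_β(k) for all k ≥ 1, let (U_i)_{i≥1} be i.i.d. random variables uniformly distributed on [0,1], and suppose that Q, U_1, U_2, … are mutually independent. Then for every Borel set K ⊆ [0,1], the probability that at least one of U_1, …, U_Q lies in K equals Leb(K)^β, i.e. P(∃ i with 1 ≤ i ≤ Q and U_i ∈ K) = Leb(K)^β, where Leb denotes Lebesgue measure. -/

import Mathlib

open MeasureTheory ProbabilityTheory Filter Finset
open scoped BigOperators

namespace Karlin

variable {β : ℝ}

noncomputable def r (β : ℝ) (n : ℕ) : ℝ := ∏ j ∈ Finset.range n, ((j : ℝ) + 1 - β) / ((j : ℝ) + 1)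

noncomputable def p (β : ℝ) (k : ℕ) : ℝ :=
  β * (∏ j ∈ Finset.range (k - 1), ((j : ℝ) + 1 - β)) / (Nat.factorial k)

lemma r_succ (n : ℕ) : r β (n + 1) = r β n * (((n : ℝ) + 1 - β) / ((n : ℝ) + 1)) := by
  rw [r, Finset.prod_range_succ, r]

lemma r_pos (hβ : β ∈ Set.Ioo (0:ℝ) 1) (n : ℕ) : 0 < r β n := by
  apply Finset.prod_pos
  intro j _
  have h : (0:ℝ) < (j:ℝ) + 1 := by positivity
  apply div_pos _ h
  nlinarith [Nat.cast_nonneg (α := ℝ) j, hβ.2]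

lemma r_le_one (hβ : β ∈ Set.Ioo (0:ℝ) 1) (n : ℕ) : r β n ≤ 1 := by
  apply Finset.prod_le_one
  · intro j _
    have h : (0:ℝ) < (j:ℝ) + 1 := by positivity
    apply le_of_lt (div_pos _ h)
    nlinarith [Nat.cast_nonneg (α := ℝ) j, hβ.2]
  · intro j _
    rw [div_le_one (by positivity)]
    nlinarith [hβ.1]

lemma r_mul_factorial (k : ℕ) :
    r β k * (Nat.factorial k : ℝ) = ∏ j ∈ Finset.range k, ((j : ℝ) + 1 - β) := by
  have hfac : (Nat.factorial k : ℝ) = ∏ j ∈ Finset.range k, ((j:ℝ)+1) := by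
    exact_mod_cast (Finset.prod_range_add_one_eq_factorial k).symm
  rw [r, hfac, ← Finset.prod_mul_distrib]
  exact Finset.prod_congr rfl fun j _ => div_mul_cancel₀ _ (by positivity)

lemma p_succ_eq (k : ℕ) : p β (k + 1) = β * r β k / ((k : ℝ) + 1) := by
  have hf : (Nat.factorial (k+1) : ℝ) = ((k:ℝ)+1) * (Nat.factorial k : ℝ) := by
    rw [Nat.factorial_succ]; push_cast; ring
  have hk : (0:ℝ) < (Nat.factorial k : ℝ) := by positivity
  rw [p, Nat.add_sub_cancel, ← r_mul_factorial, hf]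
  field_simp

lemma p_nonneg (hβ : β ∈ Set.Ioo (0:ℝ) 1) (k : ℕ) : 0 ≤ p β (k+1) := by
  rw [p_succ_eq]
  have := r_pos hβ k
  have := hβ.1
  positivity

lemma p_le_one (hβ : β ∈ Set.Ioo (0:ℝ) 1) (k : ℕ) : p β (k+1) ≤ 1 := by
  rw [p_succ_eq]
  have h1 := r_pos hβ k
  have h2 := r_le_one hβ k
  have h3 : (0:ℝ) < (k:ℝ) + 1 := by positivity
  rw [div_le_one h3]
  nlinarith [hβ.1, hβ.2, Nat.cast_nonneg (α := ℝ) k]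

/-- recurrence: `(k+2) p(k+2) = (k+1-β) p(k+1)` -/
lemma p_rec (k : ℕ) :
    ((k:ℝ) + 2) * p β (k + 2) = ((k:ℝ) + 1 - β) * p β (k + 1) := by
  have h1 := p_succ_eq (β := β) (k+1)
  have h2 := p_succ_eq (β := β) k
  rw [show k+1+1 = k+2 from rfl] at h1
  rw [h1, h2, r_succ]
  have hk1 : ((k:ℝ)+1) ≠ 0 := by positivity
  have hk2 : ((k:ℝ)+1+1) ≠ 0 := by positivity
  push_cast
  field_simp
  ring

/-- telescoping partial sums -/
lemma sum_p (n : ℕ) : ∑ k ∈ Finset.range n, p β (k+1) = 1 - r β n := by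
  induction n with
  | zero => simp [r]
  | succ n ih =>
    rw [Finset.sum_range_succ, ih, p_succ_eq, r_succ]
    have h1 : ((n:ℝ)+1) ≠ 0 := by positivity
    field_simp
    ring

lemma r_tendsto_zero (hβ : β ∈ Set.Ioo (0:ℝ) 1) :
    Tendsto (fun n => r β n) atTop (nhds 0) := by
  have hub : ∀ n, r β n ≤ Real.exp (-β * ∑ j ∈ Finset.range n, (1 / ((j:ℝ) + 1))) := by
    intro n
    rw [Finset.mul_sum, Real.exp_sum]
    apply Finset.prod_le_prod
    · intro j _
      apply le_of_lt (div_pos _ (by positivity))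
      nlinarith [Nat.cast_nonneg (α := ℝ) j, hβ.2]
    · intro j _
      have h : (0:ℝ) < (j:ℝ) + 1 := by positivity
      calc ((j:ℝ)+1-β)/((j:ℝ)+1) = -β * (1/((j:ℝ)+1)) + 1 := by field_simp; ring
        _ ≤ Real.exp (-β * (1/((j:ℝ)+1))) := Real.add_one_le_exp _
  have hexp : Tendsto (fun n => Real.exp (-β * ∑ j ∈ Finset.range n, (1 / ((j:ℝ) + 1))))
      atTop (nhds 0) := by
    apply Real.tendsto_exp_atBot.comp
    apply Tendsto.const_mul_atTop_of_neg (by linarith [hβ.1])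
    exact Real.tendsto_sum_range_one_div_nat_succ_atTop
  exact squeeze_zero (fun n => le_of_lt (r_pos hβ n)) hub hexp


lemma hasSum_p (hβ : β ∈ Set.Ioo (0:ℝ) 1) : HasSum (fun k => p β (k+1)) 1 := by
  rw [hasSum_iff_tendsto_nat_of_nonneg (fun k => p_nonneg hβ k) 1]
  have : (fun n : ℕ => ∑ i ∈ Finset.range n, p β (i+1)) = fun n => 1 - r β n := by
    funext n; exact sum_p n
  rw [this]
  have := (r_tendsto_zero hβ).const_sub 1
  simpa using this

lemma summable_aid (hβ : β ∈ Set.Ioo (0:ℝ) 1) {y c : ℝ} (hy : |y| ≤ c) (hc : c < 1)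
    (hc0 : 0 ≤ c) :
    Summable (fun k : ℕ => p β (k+1) * y^(k+1)) := by
  apply Summable.of_norm_bounded (g := fun k : ℕ => c^(k+1))
  · exact (summable_geometric_of_lt_one hc0 hc).comp_injective (add_left_injective 1)
  · intro k
    rw [norm_mul, norm_pow]
    have h1 : ‖p β (k+1)‖ ≤ 1 := by
      rw [Real.norm_eq_abs, abs_of_nonneg (p_nonneg hβ k)]; exact p_le_one hβ k
    have h2 : ‖y‖^(k+1) ≤ c^(k+1) := by
      apply pow_le_pow_left₀ (norm_nonneg _) hy
    calc ‖p β (k+1)‖ * ‖y‖^(k+1) ≤ 1 * (c^(k+1)) := by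
          apply mul_le_mul h1 h2 (by positivity) zero_le_one
      _ = c^(k+1) := one_mul _

/-- the sum function -/
noncomputable def f (β : ℝ) (t : ℝ) : ℝ := ∑' k : ℕ, p β (k+1) * t^(k+1)

lemma f_zero : f β 0 = 0 := by
  rw [f]
  convert tsum_zero with k
  simp

lemma hasDerivAt_f (hβ : β ∈ Set.Ioo (0:ℝ) 1) {y : ℝ} (hy : y ∈ Set.Ioo (-1:ℝ) 1) :
    HasDerivAt (f β) (β * (1 - f β y) / (1 - y)) y := by
  set c : ℝ := (1 + |y|)/2 with hc_def
  have hyabs : |y| < 1 := abs_lt.2 ⟨hy.1, hy.2⟩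
  have hyc : |y| < c := by rw [hc_def]; linarith
  have hc1 : c < 1 := by rw [hc_def]; linarith
  have hc0 : 0 ≤ c := by positivity
  -- the derivative series bound
  set u : ℕ → ℝ := fun k => ((k:ℝ)+1) * c^k with hu_def
  have hu : Summable u := by
    have h1 : Summable (fun k : ℕ => (k:ℝ) * c^k) := by
      simpa using summable_pow_mul_geometric_of_norm_lt_one 1
        (r := c) (by rwa [Real.norm_eq_abs, abs_of_nonneg hc0])
    have h2 : Summable (fun k : ℕ => c^k) := summable_geometric_of_lt_one hc0 hc1
    simpa [hu_def, add_mul] using h1.add h2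
  have hmem : y ∈ Set.Ioo (-c) c := by
    constructor
    · have := neg_abs_le y; simp only [neg_lt]; calc -y ≤ |y| := neg_le_abs y
        _ < c := hyc
    · calc y ≤ |y| := le_abs_self y
        _ < c := hyc
  have hDA : ∀ (k : ℕ) (z : ℝ), z ∈ Set.Ioo (-c) c →
      HasDerivAt (fun t => p β (k+1) * t^(k+1)) (p β (k+1) * (((k:ℝ)+1) * z^k)) z := by
    intro k z _
    have := (hasDerivAt_pow (k+1) z).const_mul (p β (k+1))
    simpa [Nat.add_sub_cancel] using this
  have hbound : ∀ (k : ℕ) (z : ℝ), z ∈ Set.Ioo (-c) c →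
      ‖p β (k+1) * (((k:ℝ)+1) * z^k)‖ ≤ u k := by
    intro k z hz
    have hzc : |z| ≤ c := le_of_lt (abs_lt.2 ⟨hz.1, hz.2⟩)
    rw [norm_mul, norm_mul, norm_pow]
    have h1 : ‖p β (k+1)‖ ≤ 1 := by
      rw [Real.norm_eq_abs, abs_of_nonneg (p_nonneg hβ k)]; exact p_le_one hβ k
    have h2 : ‖z‖^k ≤ c^k := pow_le_pow_left₀ (norm_nonneg _) hzc k
    have h3 : ‖((k:ℝ)+1)‖ = (k:ℝ)+1 := by
      rw [Real.norm_eq_abs, abs_of_nonneg (by positivity)]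
    calc ‖p β (k+1)‖ * (‖((k:ℝ)+1)‖ * ‖z‖^k) ≤ 1 * (((k:ℝ)+1) * c^k) := by
          rw [h3]
          apply mul_le_mul h1 _ (by positivity) zero_le_one
          apply mul_le_mul_of_nonneg_left h2 (by positivity)
      _ = u k := by rw [one_mul]
  have hsum0 : Summable (fun k : ℕ => p β (k+1) * (0:ℝ)^(k+1)) := by
    exact summable_zero.congr (fun k => by simp)
  have hcpos : (0:ℝ) < c := by
    rw [hc_def]; positivity
  have h0mem : (0:ℝ) ∈ Set.Ioo (-c) c := ⟨by linarith, hcpos⟩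
  have hD := hasDerivAt_tsum_of_isPreconnected hu (isOpen_Ioo (a := -c) (b := c))
    ((convex_Ioo (-c) c).isPreconnected) hDA hbound h0mem hsum0 hmem
  -- identify the derivative sum
  have hsumD : Summable (fun k : ℕ => p β (k+1) * (((k:ℝ)+1) * y^k)) :=
    Summable.of_norm_bounded hu (fun k => hbound k y hmem)
  set D : ℝ := ∑' k : ℕ, p β (k+1) * (((k:ℝ)+1) * y^k) with hD_def
  have hDsum : HasSum (fun k : ℕ => p β (k+1) * (((k:ℝ)+1) * y^k)) D := hsumD.hasSum
  have hfsum : HasSum (fun k : ℕ => p β (k+1) * y^(k+1)) (f β y) :=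
    (summable_aid hβ (le_of_lt hyc) hc1 hc0).hasSum
  -- shift the derivative sum
  have hshift : HasSum (fun n : ℕ => p β (n+1+1) * (((n:ℝ)+1+1) * y^(n+1)))
      (D - β) := by
    have h := (hasSum_nat_add_iff' (f := fun k : ℕ => p β (k+1) * (((k:ℝ)+1) * y^k)) 1).2 hDsum
    have h0 : ∑ i ∈ Finset.range 1, p β (i+1) * (((i:ℝ)+1) * y^i) = β := by
      simp [p]
    rw [h0] at h
    convert h using 2 with n
    · rfl
    push_cast
    ring_nf
  -- rewrite via recurrence
  have hfun : (fun n : ℕ => p β (n+1+1) * (((n:ℝ)+1+1) * y^(n+1)))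
      = fun n : ℕ => y * (p β (n+1) * (((n:ℝ)+1) * y^n)) - β * (p β (n+1) * y^(n+1)) := by
    funext n
    have hrec := p_rec (β := β) n
    have hstep : p β (n+1+1) * (((n:ℝ)+1+1) * y^(n+1))
        = (((n:ℝ)+2) * p β (n+2)) * y^(n+1) := by
      norm_num; ring
    rw [hstep, hrec]
    ring
  rw [hfun] at hshift
  have h5 : HasSum (fun n : ℕ => y * (p β (n+1) * (((n:ℝ)+1) * y^n))
      - β * (p β (n+1) * y^(n+1))) (y * D - β * f β y) :=
    (hDsum.mul_left y).sub (hfsum.mul_left β)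
  have hEq : D - β = y * D - β * f β y := hshift.unique h5
  have hy1 : (1:ℝ) - y ≠ 0 := by
    have := hy.2; intro h; linarith
  have hDval : D = β * (1 - f β y) / (1 - y) := by
    rw [eq_div_iff hy1]
    linarith [hEq]
  rw [← hDval]
  exact hD


lemma f_eq (hβ : β ∈ Set.Ioo (0:ℝ) 1) {t : ℝ} (ht : t ∈ Set.Ico (0:ℝ) 1) :
    f β t = 1 - (1-t) ^ β := by
  set F : ℝ → ℝ := fun y => (1 - f β y) * (1-y) ^ (-β) with hF_def
  have hF : ∀ y ∈ Set.Ioo (-1:ℝ) 1, HasDerivAt F 0 y := by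
    intro y hy
    have h1y : 0 < 1 - y := by linarith [hy.2]
    have hf' := hasDerivAt_f hβ hy
    have hinner : HasDerivAt (fun z : ℝ => 1 - z) (-1) y := by
      simpa using (hasDerivAt_id y).const_sub 1
    have hg : HasDerivAt (fun z : ℝ => (1-z) ^ (-β)) ((-1) * (-β) * (1-y)^(-β-1)) y :=
      hinner.rpow_const (Or.inl (ne_of_gt h1y))
    have hsub : HasDerivAt (fun z => 1 - f β z) (-(β * (1 - f β y)/(1-y))) y := by
      simpa using hf'.const_sub 1
    have hmul := hsub.mul hg
    convert hmul using 1
    · rfl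
    · rfl
    · rfl
    have hr : (1-y)^(-β-1) = (1-y)^(-β)/(1-y) := by
      rw [show -β-1 = -β - (1:ℝ) by ring, Real.rpow_sub h1y, Real.rpow_one]
    rw [hr]
    field_simp
    ring
  have hconst := constant_of_has_deriv_right_zero
    (f := F) (a := 0) (b := t)
    (fun y hy => (hF y ⟨by linarith [hy.1], lt_of_le_of_lt hy.2 ht.2⟩).continuousAt.continuousWithinAt)
    (fun y hy => (hF y ⟨by linarith [hy.1], lt_trans hy.2 ht.2⟩).hasDerivWithinAt)
  have hFt := hconst t ⟨ht.1, le_refl t⟩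
  have hF0 : F 0 = 1 := by
    rw [hF_def]
    simp [f_zero, Real.one_rpow]
  rw [hF0, hF_def] at hFt
  have h1t : 0 < 1 - t := by linarith [ht.2]
  have hne : (1-t)^β ≠ 0 := ne_of_gt (Real.rpow_pos_of_pos h1t β)
  simp only [] at hFt
  rw [Real.rpow_neg (le_of_lt h1t)] at hFt
  field_simp at hFt
  linarith

lemma hasSum_f (hβ : β ∈ Set.Ioo (0:ℝ) 1) {t : ℝ} (ht : t ∈ Set.Ico (0:ℝ) 1) :
    HasSum (fun k : ℕ => p β (k+1) * t^(k+1)) (1 - (1-t)^β) := by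
  have hs := (summable_aid hβ (y := t) (c := t)
    (by rw [abs_of_nonneg ht.1]) ht.2 ht.1).hasSum
  rwa [show (∑' k : ℕ, p β (k+1) * t^(k+1)) = f β t from rfl, f_eq hβ ht] at hs

lemma hasSum_main (hβ : β ∈ Set.Ioo (0:ℝ) 1) {t : ℝ} (ht : t ∈ Set.Icc (0:ℝ) 1) :
    HasSum (fun k : ℕ => p β (k+1) * (1 - t^(k+1))) ((1-t)^β) := by
  rcases eq_or_lt_of_le ht.2 with h1 | h1
  · subst h1
    have hz : ((1:ℝ)-1)^β = 0 := by
      rw [sub_self, Real.zero_rpow (ne_of_gt hβ.1)]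
    rw [hz]
    have : (fun k : ℕ => p β (k+1) * (1 - (1:ℝ)^(k+1))) = fun _ => (0:ℝ) := by
      funext k; simp
    rw [this]
    exact hasSum_zero
  · have hA := hasSum_f hβ ⟨ht.1, h1⟩
    have h2 := (hasSum_p hβ).sub hA
    have hfe : (fun k : ℕ => p β (k+1) - p β (k+1) * t^(k+1))
        = fun k : ℕ => p β (k+1) * (1 - t^(k+1)) := by
      funext k; ring
    rw [hfe] at h2
    have hval : 1 - (1 - (1-t)^β) = (1-t)^β := by ring
    rwa [hval] at h2

end Karlin

open Karlin

/-- Let `β ∈ (0,1)`, let `Q` be an `ℕ`-valued random variable with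
`P(Q = k) = p_β(k) = β·(1−β)⋯(k−1−β)/k!` for all `k ≥ 1`, let `(U_i)` be i.i.d.
uniform random variables on `[0,1]`, with `Q, U_0, U_1, …` mutually independent
(here `U_0, …, U_{Q-1}` play the role of `U_1, …, U_Q`). Then for every Borel set
`K ⊆ [0,1]`, `P(∃ i < Q, U_i ∈ K) = Leb(K)^β`. -/
theorem karlin_random_set_capacity
    {Ω : Type*} [MeasurableSpace Ω] (P : Measure Ω) [IsProbabilityMeasure P]
    (β : ℝ) (hβ : β ∈ Set.Ioo (0 : ℝ) 1)
    (Q : Ω → ℕ) (U : ℕ → Ω → ℝ)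
    (hQmeas : Measurable Q) (hUmeas : ∀ i, Measurable (U i))
    (hQlaw : ∀ k : ℕ, 1 ≤ k →
      P {ω | Q ω = k}
        = ENNReal.ofReal
            (β * (∏ j ∈ Finset.range (k - 1), ((j : ℝ) + 1 - β)) / (Nat.factorial k)))
    (hUlaw : ∀ i, Measure.map (U i) P = volume.restrict (Set.Icc (0 : ℝ) 1))
    (hUind : iIndepFun U P)
    (hQU : IndepFun Q (fun ω => fun i => U i ω) P)
    (K : Set ℝ) (hKmeas : MeasurableSet K) (hKsub : K ⊆ Set.Icc (0 : ℝ) 1) :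
    P {ω | ∃ i, i < Q ω ∧ U i ω ∈ K}
      = ENNReal.ofReal ((volume K).toReal ^ β) := by
  classical
  set μK : ENNReal := volume K with hμK_def
  have hIcc : volume (Set.Icc (0:ℝ) 1) = 1 := by
    rw [Real.volume_Icc]; norm_num
  have hK1 : μK ≤ 1 := by
    rw [hμK_def, ← hIcc]; exact measure_mono hKsub
  have hKfin : μK ≠ ⊤ := ne_top_of_le_ne_top (by simp) hK1
  set x : ℝ := μK.toReal with hx_def
  have hx0 : 0 ≤ x := ENNReal.toReal_nonneg
  have hx1 : x ≤ 1 := by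
    rw [hx_def]
    exact ENNReal.toReal_le_of_le_ofReal zero_le_one (by simpa using hK1)
  have hμKx : μK = ENNReal.ofReal x := (ENNReal.ofReal_toReal hKfin).symm
  -- the vector of U's
  set V : Ω → (ℕ → ℝ) := fun ω => fun i => U i ω with hV_def
  have hVmeas : Measurable V := measurable_pi_lambda _ hUmeas
  set S : ℕ → Set (ℕ → ℝ) := fun k => ⋃ i ∈ Finset.range k, (fun u : ℕ → ℝ => u i) ⁻¹' K
    with hS_def
  have hSmeas : ∀ k, MeasurableSet (S k) := fun k =>
    MeasurableSet.biUnion (Finset.range k).countable_toSet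
      (fun i _ => (measurable_pi_apply i) hKmeas)
  -- decompose the event
  have hEvent : {ω | ∃ i, i < Q ω ∧ U i ω ∈ K}
      = ⋃ k, (Q ⁻¹' {k} ∩ V ⁻¹' (S k)) := by
    ext ω
    simp only [Set.mem_setOf_eq, Set.mem_iUnion, Set.mem_inter_iff, Set.mem_preimage,
      Set.mem_singleton_iff, hS_def, hV_def, Set.mem_iUnion₂, Finset.mem_range]
    constructor
    · rintro ⟨i, hi, hK⟩
      exact ⟨Q ω, rfl, ⟨i, hi, hK⟩⟩
    · rintro ⟨k, hk, i, hi, hK⟩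
      exact ⟨i, hk ▸ hi, hK⟩
  -- P(V ∈ S k) = 1 - (1-μK)^k
  have hPC : ∀ k : ℕ, P (⋂ i ∈ Finset.range k, (U i) ⁻¹' Kᶜ) = (1 - μK)^k := by
    intro k
    rw [hUind.measure_inter_preimage_eq_mul (Finset.range k)
      (sets := fun _ => Kᶜ) (fun i _ => hKmeas.compl)]
    have hUi : ∀ i : ℕ, P ((U i) ⁻¹' Kᶜ) = 1 - μK := by
      intro i
      have h1 : P ((U i) ⁻¹' Kᶜ) = Measure.map (U i) P Kᶜ :=
        (Measure.map_apply (hUmeas i) hKmeas.compl).symm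
      rw [h1, hUlaw i, Measure.restrict_apply hKmeas.compl]
      have h2 : Kᶜ ∩ Set.Icc (0:ℝ) 1 = Set.Icc (0:ℝ) 1 \ K := by
        ext u; simp [Set.diff_eq, and_comm]
      rw [h2, measure_diff hKsub hKmeas.nullMeasurableSet hKfin, hIcc]
    calc ∏ i ∈ Finset.range k, P ((U i) ⁻¹' Kᶜ)
        = ∏ _i ∈ Finset.range k, (1 - μK) := Finset.prod_congr rfl (fun i _ => hUi i)
      _ = (1 - μK)^k := by rw [Finset.prod_const, Finset.card_range]
  have hPS : ∀ k : ℕ, P (V ⁻¹' (S k)) = 1 - (1 - μK)^k := by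
    intro k
    have hpre : V ⁻¹' (S k) = ⋃ i ∈ Finset.range k, (U i) ⁻¹' K := by
      ext ω; simp [hS_def, hV_def]
    have hcompl : (⋃ i ∈ Finset.range k, (U i) ⁻¹' K)ᶜ
        = ⋂ i ∈ Finset.range k, (U i) ⁻¹' Kᶜ := by
      simp [Set.compl_iUnion, Set.preimage_compl]
    have hCmeas : MeasurableSet (⋂ i ∈ Finset.range k, (U i) ⁻¹' Kᶜ) :=
      MeasurableSet.biInter (Finset.range k).countable_toSet
        (fun i _ => (hUmeas i) hKmeas.compl)
    have := measure_compl hCmeas (measure_ne_top P _)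
    rw [hPC k] at this
    rw [hpre, ← compl_compl (⋃ i ∈ Finset.range k, (U i) ⁻¹' K), hcompl, this,
      measure_univ]
  -- sum decomposition
  have hQpre : ∀ k : ℕ, MeasurableSet (Q ⁻¹' {k} ∩ V ⁻¹' (S k)) := fun k =>
    (hQmeas (measurableSet_singleton k)).inter (hVmeas (hSmeas k))
  have hdisj : Pairwise (Function.onFun Disjoint
      (fun k => Q ⁻¹' {k} ∩ V ⁻¹' (S k))) := by
    intro k l hkl
    apply Set.disjoint_left.2
    rintro ω ⟨hk, -⟩ ⟨hl, -⟩
    exact hkl (hk.symm.trans hl)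
  have hsum : P {ω | ∃ i, i < Q ω ∧ U i ω ∈ K}
      = ∑' k : ℕ, P (Q ⁻¹' {k}) * (1 - (1 - μK)^k) := by
    rw [hEvent, measure_iUnion hdisj hQpre]
    congr 1
    funext k
    rw [hQU.measure_inter_preimage_eq_mul _ _ (measurableSet_singleton k) (hSmeas k), hPS k]
  rw [hsum]
  -- now evaluate the series
  set c : ℕ → ℝ := fun k => Karlin.p β k * (1 - (1-x)^k) with hc_def
  have hc_nonneg : ∀ k, 0 ≤ c k := by
    intro k
    match k with
    | 0 => simp [hc_def]
    | (n+1) =>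
      apply mul_nonneg (p_nonneg hβ n)
      have : (1-x)^(n+1) ≤ 1 := pow_le_one₀ (by linarith) (by linarith)
      linarith
  have hmain := hasSum_main (β := β) hβ (t := 1 - x) ⟨by linarith, by linarith⟩
  have hmain' : HasSum (fun n : ℕ => c (n+1)) (x ^ β) := by
    have hval : (1 - (1-x))^β = x^β := by norm_num
    rw [← hval]
    exact hmain
  have hfull : HasSum c (x ^ β) := by
    have h := (hasSum_nat_add_iff (f := c) 1).1 hmain'
    have hc0 : ∑ i ∈ Finset.range 1, c i = 0 := by simp [hc_def]
    rwa [hc0, add_zero] at h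
  -- term identification
  have hterm : ∀ k : ℕ, P (Q ⁻¹' {k}) * (1 - (1 - μK)^k) = ENNReal.ofReal (c k) := by
    intro k
    have hofReal : (1 : ENNReal) - (1 - μK)^k = ENNReal.ofReal (1 - (1-x)^k) := by
      rw [hμKx]
      rw [show (1:ENNReal) - ENNReal.ofReal x = ENNReal.ofReal (1 - x) by
        rw [ENNReal.ofReal_sub 1 hx0, ENNReal.ofReal_one]]
      rw [← ENNReal.ofReal_pow (by linarith)]
      rw [ENNReal.ofReal_sub 1 (pow_nonneg (by linarith) k), ENNReal.ofReal_one]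
    match k with
    | 0 => simp [hc_def]
    | (n+1) =>
      have hQk : P (Q ⁻¹' {n+1}) = ENNReal.ofReal (Karlin.p β (n+1)) := by
        have := hQlaw (n+1) (Nat.le_add_left 1 n)
        rw [show Q ⁻¹' {n+1} = {ω | Q ω = n+1} from rfl, this]
        rfl
      rw [hQk, hofReal, ← ENNReal.ofReal_mul (p_nonneg hβ n)]
  calc ∑' k : ℕ, P (Q ⁻¹' {k}) * (1 - (1 - μK)^k)
      = ∑' k : ℕ, ENNReal.ofReal (c k) := by
        congr 1; funext k; exact hterm k
    _ = ENNReal.ofReal (∑' k, c k) :=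
        (ENNReal.ofReal_tsum_of_nonneg hc_nonneg hfull.summable).symm
    _ = ENNReal.ofReal (x ^ β) := by rw [hfull.tsum_eq]
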